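/- In an epistemic-gap-free mechanism with imperfect information, for any root-to-node decision path v_1,…,v_k, if v_k ∈ ewin_a(o) and v_k ∉ win_a(ō), then there exist an index i < k and an agent b such that v_i ∈ ewin_b(ō). -/

import Mathlib

inductive Outcome where
  | yes : Outcome
  | no : Outcome
deriving DecidableEq

def Outcome.flip : Outcome → Outcome
  | .yes => .no
  | .no => .yes

/-- A decision-making mechanism (perfect information):
a finite rooted directed tree `(V, E)` with root `root`,
agents `A`, actions `Act`, available-action sets `Δ`,
choice functions `τ`, and a leaf labelling `lab`. -/
structure Mech (V A Act : Type) where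
  finV : Fintype V
  E : V → V → Prop
  root : V
  root_no_parent : ∀ v, ¬ E v root
  unique_parent : ∀ u v w, E u w → E v w → u = v
  reach : ∀ v, Relation.ReflTransGen E root v
  Δ : A → V → Set Act
  Δ_nonempty : ∀ a v, (∃ u, E v u) → (Δ a v).Nonempty
  τ : V → (A → Act) → V
  τ_child : ∀ v δ, (∃ u, E v u) → (∀ b, δ b ∈ Δ b v) → E v (τ v δ)
  lab : V → Outcome

namespace Mech

variable {V A Act : Type}

def IsLeaf (M : Mech V A Act) (v : V) : Prop := ∀ u, ¬ M.E v u

def IsDecision (M : Mech V A Act) (v : V) : Prop := ∃ u, M.E v u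

/-- `Next a d v` : the set of children the process can move to from `v`
when agent `a` chooses action `d`. -/
def Next (M : Mech V A Act) (a : A) (d : Act) (v : V) : Set V :=
  { u | ∃ δ : A → Act, (∀ b, δ b ∈ M.Δ b v) ∧ δ a = d ∧ u = M.τ v δ }

/-- `win_a(o)`: the smallest set containing all leaves labelled `o` and
closed under: if `Next a d v ⊆ win_a(o)` for some available action `d`
at a decision node `v`, then `v ∈ win_a(o)`. -/
inductive Win (M : Mech V A Act) (a : A) (o : Outcome) : V → Prop where
  | leaf (v : V) : M.IsLeaf v → M.lab v = o → Win M a o v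
  | step (v : V) (d : Act) : M.IsDecision v → d ∈ M.Δ a v →
      (∀ u ∈ M.Next a d v, Win M a o u) → Win M a o v

/-- A decision path starting at the root. -/
def RootPath (M : Mech V A Act) (l : List V) : Prop :=
  l.head? = some M.root ∧ l.Chain' M.E

/-- Agent `a` is (counterfactually) responsible at leaf `v`. -/
def Responsible (M : Mech V A Act) (a : A) (v : V) : Prop :=
  ∃ l : List V, M.RootPath l ∧ l.getLast? = some v ∧
    ∃ u ∈ l, M.IsDecision u ∧ M.Win a (M.lab v).flip u

def GapFree (M : Mech V A Act) : Prop :=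
  ∀ v, M.IsLeaf v → ∃ a, M.Responsible a v

def Dictator (M : Mech V A Act) (a : A) (v : V) : Prop :=
  M.Win a Outcome.yes v ∧ M.Win a Outcome.no v

def ElectedDictatorship (M : Mech V A Act) : Prop :=
  ∀ (l : List V) (v : V), M.RootPath l → l.getLast? = some v → M.IsLeaf v →
    ∃ u ∈ l, ∃ a, M.Dictator a u

end Mech

/-- A decision-making mechanism with imperfect information. -/
structure IMech (V A Act : Type) extends Mech V A Act where
  sim : A → V → V → Prop
  sim_equiv : ∀ a, Equivalence (sim a)
  sim_decision : ∀ a u v, sim a u v → ((∃ w, E u w) ↔ (∃ w, E v w))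
  sim_Δ : ∀ a u v, sim a u v → Δ a u = Δ a v

namespace IMech

variable {V A Act : Type}

/-- `Next a d ([v]_a)` : the union of `Next a d u` over all `u ∼_a v`. -/
def NextCl (M : IMech V A Act) (a : A) (d : Act) (v : V) : Set V :=
  { w | ∃ u, M.sim a v u ∧ w ∈ M.toMech.Next a d u }

/-- `ewin_a(o)`. -/
inductive EWin (M : IMech V A Act) (a : A) (o : Outcome) : V → Prop where
  | leaf (v : V) : M.toMech.IsLeaf v → M.lab v = o → EWin M a o v
  | known (v : V) (d : Act) : M.toMech.IsDecision v → d ∈ M.Δ a v →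
      (∀ w ∈ M.NextCl a d v, EWin M a o w) → EWin M a o v
  | blind (v : V) : M.toMech.IsDecision v →
      (∀ d ∈ M.Δ a v, ∀ w ∈ M.toMech.Next a d v, EWin M a o w) → EWin M a o v

/-- `uwin_a(o)`. -/
inductive UWin (M : IMech V A Act) (a : A) (o : Outcome) : V → Prop where
  | leaf (v : V) : M.toMech.IsLeaf v → M.lab v = o → UWin M a o v
  | known (v : V) (d : Act) : M.toMech.IsDecision v → d ∈ M.Δ a v →
      (∀ w ∈ M.NextCl a d v, UWin M a o w) → UWin M a o v

def EpistemicallyResponsible (M : IMech V A Act) (a : A) (v : V) : Prop :=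
  ∃ l : List V, M.toMech.RootPath l ∧ l.getLast? = some v ∧
    ∃ u ∈ l, M.toMech.IsDecision u ∧ M.EWin a (M.lab v).flip u

def EpistemicGapFree (M : IMech V A Act) : Prop :=
  ∀ v, M.toMech.IsLeaf v → ∃ a, M.EpistemicallyResponsible a v

def EpistemicDictator (M : IMech V A Act) (a : A) (v : V) : Prop :=
  M.EWin a Outcome.yes v ∧ M.EWin a Outcome.no v

def ElectedEpistemicDictatorship (M : IMech V A Act) : Prop :=
  ∀ (l : List V) (v : V), M.toMech.RootPath l → l.getLast? = some v →
    M.toMech.IsLeaf v → ∃ u ∈ l, ∃ a, M.EpistemicDictator a u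

def SemiEpistemicDictator (M : IMech V A Act) (a : A) (v : V) : Prop :=
  ∃ o : Outcome, M.EWin a o v ∧ M.toMech.Win a o.flip v

def ElectedSemiEpistemicDictatorship (M : IMech V A Act) : Prop :=
  ∀ (l : List V) (v : V), M.toMech.RootPath l → l.getLast? = some v →
    M.toMech.IsLeaf v → ∃ u ∈ l, ∃ a, M.SemiEpistemicDictator a u

end IMech


section Aux

open Relation

namespace Mech

variable {V A Act : Type} (M : Mech V A Act)

/-- `Steps n u v`: there is an `E`-path of length `n` from `u` to `v`. -/
def Steps : ℕ → V → V → Prop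
  | 0, u, v => u = v
  | (n+1), u, v => ∃ w, Steps n u w ∧ M.E w v

lemma steps_of_rtg {u v : V} (h : Relation.ReflTransGen M.E u v) : ∃ n, M.Steps n u v := by
  induction h with
  | refl => exact ⟨0, rfl⟩
  | tail _ he ih => obtain ⟨n, hn⟩ := ih; exact ⟨n + 1, _, hn, he⟩

open Classical in
noncomputable def depth (v : V) : ℕ :=
  Nat.find (M.steps_of_rtg (M.reach v))

lemma depth_lt {v u : V} (h : M.E v u) : M.depth v < M.depth u := by
  classical
  have hu : M.Steps (M.depth u) M.root u := Nat.find_spec (M.steps_of_rtg (M.reach u))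
  cases hdu : M.depth u with
  | zero =>
      rw [hdu] at hu
      exact absurd (hu ▸ h) (M.root_no_parent v)
  | succ m =>
      rw [hdu] at hu
      obtain ⟨x, hx, hxu⟩ := hu
      have hxv : x = v := M.unique_parent x v u hxu h
      rw [hxv] at hx
      have : M.depth v ≤ m := Nat.find_min' (M.steps_of_rtg (M.reach v)) hx
      omega

lemma wf_child : WellFounded (fun u v : V => M.E v u) := by
  haveI := M.finV
  have key : ∀ x y : V, Relation.TransGen M.E x y → M.depth x < M.depth y := by
    intro x y h
    induction h with
    | single h => exact M.depth_lt h
    | tail _ h ih => exact lt_trans ih (M.depth_lt h)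
  have hwf : WellFounded (fun u v : V => Relation.TransGen M.E v u) := by
    haveI : IsTrans V (fun u v : V => Relation.TransGen M.E v u) :=
      ⟨fun a b c h1 h2 => h2.trans h1⟩
    haveI : IsIrrefl V (fun u v : V => Relation.TransGen M.E v u) :=
      ⟨fun v h => lt_irrefl _ (key v v h)⟩
    exact Finite.wellFounded_of_trans_of_irrefl _
  exact Subrelation.wf (fun h => Relation.TransGen.single h) hwf

lemma win_leaf_lab {a : A} {o : Outcome} {v : V} (hleaf : M.IsLeaf v)
    (h : M.Win a o v) : M.lab v = o := by
  cases h with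
  | leaf _ _ h => exact h
  | step _ d hdec => obtain ⟨u, hu⟩ := hdec; exact absurd hu (hleaf u)

lemma outcome_flip_ne (o : Outcome) : o.flip ≠ o := by cases o <;> simp [Outcome.flip]

lemma win_not_win {a b : A} (hne : a ≠ b) {o : Outcome} {v : V}
    (h1 : M.Win a o v) (h2 : M.Win b o.flip v) : False := by
  induction h1 with
  | leaf v hleaf hlab =>
      have := M.win_leaf_lab hleaf h2
      rw [hlab] at this
      exact outcome_flip_ne o this.symm
  | step v d hdec hd hnext ih =>
      cases h2 with
      | leaf _ hleaf _ => obtain ⟨u, hu⟩ := hdec; exact hleaf u hu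
      | step _ e hdec' he hnext' =>
          classical
          choose f hf using fun c => M.Δ_nonempty c v hdec
          set δ : A → Act := fun c => if c = a then d else if c = b then e else f c with hδdef
          have hδ : ∀ c, δ c ∈ M.Δ c v := by
            intro c
            by_cases hca : c = a
            · subst hca; simpa [hδdef] using hd
            · by_cases hcb : c = b
              · subst hcb; simpa [hδdef, hca] using he
              · simpa [hδdef, hca, hcb] using hf c
          have ha : δ a = d := by simp [hδdef]
          have hb : δ b = e := by simp [hδdef, Ne.symm hne]
          exact ih (M.τ v δ) ⟨δ, hδ, ha, rfl⟩ (hnext' (M.τ v δ) ⟨δ, hδ, hb, rfl⟩)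

lemma rootPath_unique_aux :
    ∀ (n : ℕ) (l l' : List V) (w : V), l.length ≤ n → M.RootPath l → M.RootPath l' →
      l.getLast? = some w → l'.getLast? = some w → l = l' := by
  intro n
  induction n with
  | zero =>
      intro l l' w hlen hr hr' hw hw'
      have : l = [] := List.length_eq_zero_iff.mp (Nat.le_zero.mp hlen)
      subst this; simp at hw
  | succ n ih =>
      intro l l' w hlen hr hr' hw hw'
      obtain ⟨s, rfl⟩ := List.getLast?_eq_some_iff.mp hw
      obtain ⟨s', rfl⟩ := List.getLast?_eq_some_iff.mp hw'
      rcases s.eq_nil_or_concat with rfl | ⟨t, p, rfl⟩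
      · have hroot : w = M.root := by
          simpa using hr.1
        rcases s'.eq_nil_or_concat with rfl | ⟨t', p', rfl⟩
        · rfl
        · exfalso
          rw [List.concat_eq_append] at hr'
          have hE : M.E p' w := by
            have := (List.isChain_append.mp hr'.2).2.2
            simpa using this p' (by simp) w (by simp)
          exact M.root_no_parent p' (hroot ▸ hE)
      · rw [List.concat_eq_append] at *
        have hE : M.E p w := by
          have := (List.isChain_append.mp hr.2).2.2
          simpa using this p (by simp) w (by simp)
        rcases s'.eq_nil_or_concat with rfl | ⟨t', p', rfl⟩
        · exfalso
          have hroot : w = M.root := by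
            simpa using hr'.1
          exact M.root_no_parent p (hroot ▸ hE)
        · rw [List.concat_eq_append] at *
          have hE' : M.E p' w := by
            have := (List.isChain_append.mp hr'.2).2.2
            simpa using this p' (by simp) w (by simp)
          have hpp : p = p' := M.unique_parent p p' w hE hE'
          subst hpp
          have hrp : M.RootPath (t ++ [p]) := by
            constructor
            · rw [← List.head?_append_of_ne_nil (t ++ [p]) (l₂ := [w]) (by simp)]
              exact hr.1
            · exact (List.isChain_append.mp hr.2).1
          have hrp' : M.RootPath (t' ++ [p]) := by
            constructor
            · rw [← List.head?_append_of_ne_nil (t' ++ [p]) (l₂ := [w]) (by simp)]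
              exact hr'.1
            · exact (List.isChain_append.mp hr'.2).1
          have hlen' : (t ++ [p]).length ≤ n := by
            have := hlen; simp at this ⊢; omega
          have := ih (t ++ [p]) (t' ++ [p]) p hlen' hrp hrp'
            (List.getLast?_concat (l := t)) (List.getLast?_concat (l := t'))
          rw [this]

lemma rootPath_unique {l l' : List V} {w : V} (hr : M.RootPath l) (hr' : M.RootPath l')
    (hw : l.getLast? = some w) (hw' : l'.getLast? = some w) : l = l' :=
  M.rootPath_unique_aux l.length l l' w le_rfl hr hr' hw hw'

lemma exists_extension {a : A} {o : Outcome} (v : V) :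
    M.Win a o v → ¬ M.Win a o.flip v →
    ∃ ext : List V, List.Chain M.E v ext ∧
      (∀ u ∈ ext, M.Win a o u ∧ ¬ M.Win a o.flip u) ∧
      ∃ w, (v :: ext).getLast? = some w ∧ M.IsLeaf w ∧ M.lab w = o := by
  refine M.wf_child.induction
    (C := fun v => M.Win a o v → ¬ M.Win a o.flip v →
      ∃ ext : List V, List.Chain M.E v ext ∧
        (∀ u ∈ ext, M.Win a o u ∧ ¬ M.Win a o.flip u) ∧
        ∃ w, (v :: ext).getLast? = some w ∧ M.IsLeaf w ∧ M.lab w = o) v ?_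
  intro v ih h1 h2
  cases h1 with
  | leaf v hleaf hlab =>
      exact ⟨[], List.Chain.nil, by simp, v, by simp, hleaf, hlab⟩
  | step v d hdec hd hnext =>
      have hex : ∃ u ∈ M.Next a d v, ¬ M.Win a o.flip u := by
        by_contra hcon
        push_neg at hcon
        exact h2 (Win.step v d hdec hd hcon)
      obtain ⟨u, hu, hu2⟩ := hex
      have hE : M.E v u := by
        obtain ⟨δ, hδ, -, rfl⟩ := hu
        exact M.τ_child v δ hdec hδ
      obtain ⟨ext, hchain, hinv, w, hlastw, hleafw, hlabw⟩ := ih u hE (hnext u hu) hu2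
      refine ⟨u :: ext, List.Chain.cons hE hchain, ?_, w, ?_, hleafw, hlabw⟩
      · intro x hx
        rcases List.mem_cons.mp hx with rfl | hx
        · exact ⟨hnext x hu, hu2⟩
        · exact hinv x hx
      · rw [List.getLast?_cons_cons]; exact hlastw

end Mech

namespace IMech

variable {V A Act : Type} (M : IMech V A Act)

lemma ewin_win {a : A} {o : Outcome} {v : V} (h : M.EWin a o v) : M.toMech.Win a o v := by
  induction h with
  | leaf v hl hlab => exact Mech.Win.leaf v hl hlab
  | known v d hdec hd h ih =>
      exact Mech.Win.step v d hdec hd (fun u hu => ih u ⟨v, (M.sim_equiv a).refl v, hu⟩)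
  | blind v hdec h ih =>
      obtain ⟨d, hd⟩ := M.Δ_nonempty a v hdec
      exact Mech.Win.step v d hdec hd (fun u hu => ih d hd u hu)

end IMech

end Aux

theorem stmt8 {V A Act : Type} (M : IMech V A Act)
    (hgf : M.EpistemicGapFree) (a : A) (o : Outcome)
    (l : List V) (vk : V) (hl : M.toMech.RootPath l) (hlast : l.getLast? = some vk)
    (h1 : M.EWin a o vk) (h2 : ¬ M.toMech.Win a o.flip vk) :
    ∃ i : ℕ, ∃ hi : i + 1 < l.length, ∃ b : A,
      M.EWin b o.flip (l.get ⟨i, Nat.lt_of_succ_lt hi⟩) := by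
  classical
  have hwk : M.toMech.Win a o vk := M.ewin_win h1
  obtain ⟨ext, hchain, hinv, w, hw, hleafw, hlabw⟩ := M.toMech.exists_extension vk hwk h2
  have hlne : l ≠ [] := by rintro rfl; simp at hlast
  -- the extended root path
  set L : List V := l ++ ext with hLdef
  have hrpL : M.toMech.RootPath L := by
    constructor
    · rw [hLdef, List.head?_append_of_ne_nil l hlne]; exact hl.1
    · rw [hLdef]; refine List.isChain_append.mpr ?_
      refine ⟨hl.2, ?_, ?_⟩
      · exact List.IsChain.tail (l := vk :: ext) hchain
      · intro x hx y hy
        rw [hlast] at hx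
        simp only [Option.mem_def, Option.some.injEq] at hx
        subst hx
        cases ext with
        | nil => simp at hy
        | cons e es =>
            simp only [List.head?_cons, Option.mem_def, Option.some.injEq] at hy
            subst hy
            exact (List.chain_cons.mp hchain).1
  have hLlast : L.getLast? = some w := by
    obtain ⟨s, rfl⟩ := List.getLast?_eq_some_iff.mp hlast
    rw [hLdef, List.append_assoc, List.singleton_append,
      List.getLast?_append_of_ne_nil s (by simp)]
    exact hw
  obtain ⟨b, l'', hrp'', hlast'', u, humem, hudec, huewin⟩ := hgf w hleafw
  have hll : l'' = L := M.toMech.rootPath_unique hrp'' hrpL hlast'' hLlast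
  subst hll
  rw [hlabw] at huewin
  have huwin : M.toMech.Win b o.flip u := M.ewin_win huewin
  rcases List.mem_append.mp humem with hul | huext
  · -- u on the original path
    have huvk : u ≠ vk := by
      rintro rfl
      by_cases hba : b = a
      · subst hba; exact h2 huwin
      · exact M.toMech.win_not_win (Ne.symm hba) hwk huwin
    obtain ⟨j, hj⟩ := List.mem_iff_get.mp hul
    have hj1 : j.1 + 1 < l.length := by
      rcases Nat.lt_or_ge (j.1 + 1) l.length with h | h
      · exact h
      · exfalso
        have hj1 : j.1 + 1 = l.length := le_antisymm (Nat.succ_le_of_lt j.2) h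
        obtain ⟨s, hs⟩ := List.getLast?_eq_some_iff.mp hlast
        subst hs
        have hsl : j.1 = s.length := by
          simp at hj1 ⊢; omega
        have hvk : (s ++ [vk]).get j = vk := by
          rw [List.get_eq_getElem]
          exact List.getElem_concat_length (l := s) (a := vk) (i := j.1) hsl j.2
        exact huvk (by rw [← hj, hvk])
    refine ⟨j.1, hj1, b, ?_⟩
    have : (⟨j.1, Nat.lt_of_succ_lt hj1⟩ : Fin l.length) = j := Fin.ext rfl
    rw [this, hj]
    exact huewin
  · -- u on the extension: contradiction
    exfalso
    obtain ⟨huw1, huw2⟩ := hinv u huext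
    by_cases hba : b = a
    · subst hba; exact huw2 huwin
    · exact M.toMech.win_not_win (Ne.symm hba) huw1 huwin
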